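/- For M > 0 and λ ≥ 0, the second derivative with respect to r* of Q_λ at its critical point r(λ) (the unique positive root of λ²r² - 3M(λ²-1)r - 8M²) equals -(2/r(λ)⁵)(1 - 2M/r(λ))²·[2λ²r(λ) - 3M(λ²-1)], and this quantity is strictly negative; in particular the critical point is a nondegenerate maximum. -/

import Mathlib

lemma Qinner_hasDerivAt (M lam s : ℝ) (hs : s ≠ 0) :
    HasDerivAt (fun s : ℝ => (1 - 2 * M / s) * (2 * M / s ^ 3 + lam ^ 2 / s ^ 2))
      ((16 * M ^ 2 + 6 * M * (lam ^ 2 - 1) * s - 2 * lam ^ 2 * s ^ 2) / s ^ 5) s := by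
  have h1 : HasDerivAt (fun s : ℝ => 1 - 2 * M / s) (2 * M / s ^ 2) s := by
    have h := ((hasDerivAt_const s (2 * M)).div (hasDerivAt_id s) hs).const_sub 1
    refine h.congr_deriv ?_
    simp only [id_eq]
    field_simp
    ring
  have h2 : HasDerivAt (fun s : ℝ => 2 * M / s ^ 3 + lam ^ 2 / s ^ 2)
      (-(6 * M) / s ^ 4 + -(2 * lam ^ 2) / s ^ 3) s := by
    have ha := (hasDerivAt_const s (2 * M)).div (hasDerivAt_pow 3 s) (pow_ne_zero 3 hs)
    have hb := (hasDerivAt_const s (lam ^ 2)).div (hasDerivAt_pow 2 s) (pow_ne_zero 2 hs)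
    have h := ha.add hb
    refine h.congr_deriv ?_
    field_simp
    ring
  have h := h1.mul h2
  refine h.congr_deriv ?_
  field_simp
  ring

theorem second_rstar_derivative_at_critical_point
    (M lam : ℝ) (hM : 0 < M) (hlam : 0 ≤ lam) (rl : ℝ)
    (hroot : lam ^ 2 * rl ^ 2 - 3 * M * (lam ^ 2 - 1) * rl - 8 * M ^ 2 = 0)
    (hrl : rl ∈ Set.Icc (8 * M / 3) (3 * M)) :
    (1 - 2 * M / rl) *
      deriv (fun r : ℝ => (1 - 2 * M / r) *
        deriv (fun s : ℝ => (1 - 2 * M / s) * (2 * M / s ^ 3 + lam ^ 2 / s ^ 2)) r) rl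
      = -(2 / rl ^ 5) * (1 - 2 * M / rl) ^ 2 * (2 * lam ^ 2 * rl - 3 * M * (lam ^ 2 - 1)) ∧
    -(2 / rl ^ 5) * (1 - 2 * M / rl) ^ 2 * (2 * lam ^ 2 * rl - 3 * M * (lam ^ 2 - 1)) < 0 := by
  have hrl0 : 0 < rl := lt_of_lt_of_le (by linarith [hrl.1]) hrl.1
  have hrlne : rl ≠ 0 := ne_of_gt hrl0
  -- 1 - 2M/rl > 0 since rl ≥ 8M/3 > 2M
  have h2M : 2 * M < rl := by linarith [hrl.1]
  have hfac : 0 < 1 - 2 * M / rl := by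
    rw [sub_pos, div_lt_one hrl0]; linarith
  -- positivity of the last bracket
  have hbr : 0 < 2 * lam ^ 2 * rl - 3 * M * (lam ^ 2 - 1) := by
    have h : rl * (2 * lam ^ 2 * rl - 3 * M * (lam ^ 2 - 1)) = lam ^ 2 * rl ^ 2 + 8 * M ^ 2 := by
      nlinarith [hroot]
    nlinarith [sq_nonneg lam, sq_nonneg rl, mul_pos hM hM, sq_nonneg (lam * rl)]
  -- the inner derivative function agrees with a closed form near rl
  have hEq : (fun r : ℝ => (1 - 2 * M / r) *
        deriv (fun s : ℝ => (1 - 2 * M / s) * (2 * M / s ^ 3 + lam ^ 2 / s ^ 2)) r)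
      =ᶠ[nhds rl] (fun r : ℝ => (1 - 2 * M / r) *
        ((16 * M ^ 2 + 6 * M * (lam ^ 2 - 1) * r - 2 * lam ^ 2 * r ^ 2) / r ^ 5)) := by
    filter_upwards [eventually_ne_nhds hrlne] with r hr
    rw [(Qinner_hasDerivAt M lam r hr).deriv]
  rw [hEq.deriv_eq]
  -- compute the derivative of the closed form at rl
  have h1 : HasDerivAt (fun r : ℝ => 1 - 2 * M / r) (2 * M / rl ^ 2) rl := by
    have h := ((hasDerivAt_const rl (2 * M)).div (hasDerivAt_id rl) hrlne).const_sub 1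
    refine h.congr_deriv ?_
    simp only [id_eq]
    field_simp
    ring
  have hnum : HasDerivAt (fun r : ℝ => 16 * M ^ 2 + 6 * M * (lam ^ 2 - 1) * r - 2 * lam ^ 2 * r ^ 2)
      (6 * M * (lam ^ 2 - 1) - 2 * lam ^ 2 * (2 * rl)) rl := by
    have h := (((hasDerivAt_id rl).const_mul (6 * M * (lam ^ 2 - 1))).const_add (16 * M ^ 2)).sub
      ((hasDerivAt_pow 2 rl).const_mul (2 * lam ^ 2))
    refine h.congr_deriv ?_
    ring
  have h2 : HasDerivAt (fun r : ℝ =>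
      (16 * M ^ 2 + 6 * M * (lam ^ 2 - 1) * r - 2 * lam ^ 2 * r ^ 2) / r ^ 5)
      (((6 * M * (lam ^ 2 - 1) - 2 * lam ^ 2 * (2 * rl)) * rl ^ 5 -
        (16 * M ^ 2 + 6 * M * (lam ^ 2 - 1) * rl - 2 * lam ^ 2 * rl ^ 2) * (5 * rl ^ 4)) /
        (rl ^ 5) ^ 2) rl := by
    have h := hnum.div (hasDerivAt_pow 5 rl) (pow_ne_zero 5 hrlne)
    refine h.congr_deriv ?_
    norm_num
  rw [(h1.fun_mul h2).deriv]
  have hnum0 : 16 * M ^ 2 + 6 * M * (lam ^ 2 - 1) * rl - 2 * lam ^ 2 * rl ^ 2 = 0 := by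
    linarith [hroot]
  constructor
  · rw [hnum0]
    field_simp
    ring
  · have h5 : 0 < rl ^ 5 := pow_pos hrl0 5
    have : 0 < 2 / rl ^ 5 * (1 - 2 * M / rl) ^ 2 * (2 * lam ^ 2 * rl - 3 * M * (lam ^ 2 - 1)) := by
      positivity
    linarith
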